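/- For every γ ∈ (0,1), σ ≥ 0, θ ∈ (π/2, π), κ > 0 and T > 0 there exists a constant c > 0 such that for every t ∈ (0, T] and every real λ ≥ 0, the contour integral E(t) = (1/(2πi)) ∫_{Γ_{θ,κ}} e^{zt}·((σ+z)^γ + λ)^{−1} dz (understood as the sum of the parametrized integrals over the two rays z = r e^{±iθ}, r ∈ [κ, ∞), and the arc z = κ e^{iψ}, ψ ∈ [−θ, θ], with orientation of increasing imaginary part) satisfies |E(t)| ≤ c·t^{γ−1}. -/

import Mathlib

open Real MeasureTheory

/-- Integrand e^{zt}((σ+z)^γ + λ)^{−1} of the sectorial representation of E(t). -/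
noncomputable def resKer (γ σ lam t : ℝ) (z : ℂ) : ℂ :=
  Complex.exp (z * (t : ℂ)) * (((σ : ℂ) + z) ^ (γ : ℂ) + (lam : ℂ))⁻¹

/-- The contour integral E(t) over the full sectorial contour Γ_{θ,κ}, written as the
sum of the parametrized integrals over the two rays z = r e^{±iθ}, r ∈ [κ,∞), and the
arc z = κ e^{iψ}, ψ ∈ [−θ,θ], oriented with increasing imaginary part. -/
noncomputable def Eop (γ σ lam θ κ t : ℝ) : ℂ :=
  (1 / (2 * (π : ℂ) * Complex.I)) *
    ((∫ r in Set.Ioi κ,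
        (resKer γ σ lam t ((r : ℂ) * Complex.exp ((θ : ℂ) * Complex.I)) *
            Complex.exp ((θ : ℂ) * Complex.I)
          - resKer γ σ lam t ((r : ℂ) * Complex.exp (-(θ : ℂ) * Complex.I)) *
            Complex.exp (-(θ : ℂ) * Complex.I)))
      + ∫ ψ in (-θ)..θ,
          resKer γ σ lam t ((κ : ℂ) * Complex.exp ((ψ : ℂ) * Complex.I)) *
            (Complex.I * (κ : ℂ) * Complex.exp ((ψ : ℂ) * Complex.I)))


/-- Lower bound for |w + l| when w lies in the sector Re w ≥ cos α |w|. -/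
lemma lemA {α : ℝ} (hα0 : 0 < α) (hαπ : α < π) {w : ℂ}
    (hsec : Real.cos α * ‖w‖ ≤ w.re) {l : ℝ} (hl : 0 ≤ l) :
    Real.sin α * ‖w‖ ≤ ‖w + (l : ℂ)‖ := by
  have hsin : 0 < Real.sin α := Real.sin_pos_of_pos_of_lt_pi hα0 hαπ
  have hsin1 : Real.sin α ≤ 1 := Real.sin_le_one α
  have hsq : (‖w‖)^2 = w.re^2 + w.im^2 := by
    rw [Complex.sq_norm, Complex.normSq_apply]; ring
  have hsq2 : (‖w + (l:ℂ)‖)^2 = (w.re + l)^2 + w.im^2 := by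
    rw [Complex.sq_norm, Complex.normSq_apply]; simp; ring
  have habs : 0 ≤ ‖w‖ := norm_nonneg w
  have habs2 : 0 ≤ ‖w + (l:ℂ)‖ := norm_nonneg _
  have hpyth := Real.sin_sq_add_cos_sq α
  rcases le_or_gt 0 w.re with hre | hre
  · nlinarith
  · nlinarith [sq_nonneg (w.re + l), sq_nonneg w.im, sq_nonneg (Real.cos α * ‖w‖ - w.re)]

/-- The sector Re z ≥ cos θ |z| (for θ ∈ (π/2, π)) is stable under adding σ ≥ 0. -/
lemma lemB {θ : ℝ} (hθ : θ ∈ Set.Ioo (π/2) π) {σ : ℝ} (hσ : 0 ≤ σ) {z : ℂ}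
    (hsec : Real.cos θ * ‖z‖ ≤ z.re) :
    Real.cos θ * ‖(σ : ℂ) + z‖ ≤ ((σ : ℂ) + z).re := by
  have hcos : Real.cos θ < 0 :=
    Real.cos_neg_of_pi_div_two_lt_of_lt hθ.1 (by linarith [hθ.2, Real.pi_pos])
  have hsin : 0 < Real.sin θ := Real.sin_pos_of_pos_of_lt_pi (by linarith [Real.pi_pos, hθ.1]) hθ.2
  have hre : ((σ:ℂ) + z).re = σ + z.re := by simp
  have him : ((σ:ℂ) + z).im = z.im := by simp
  have hsq : (‖z‖)^2 = z.re^2 + z.im^2 := by rw [Complex.sq_norm, Complex.normSq_apply]; ring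
  have hsq2 : (‖(σ:ℂ)+z‖)^2 = (σ + z.re)^2 + z.im^2 := by
    rw [Complex.sq_norm, Complex.normSq_apply]; simp; ring
  have habs : 0 ≤ ‖z‖ := norm_nonneg z
  have habs2 : 0 ≤ ‖(σ:ℂ)+z‖ := norm_nonneg _
  have hpyth := Real.sin_sq_add_cos_sq θ
  rw [hre]
  rcases le_or_gt 0 (σ + z.re) with h | h
  · nlinarith
  · -- σ + z.re < 0, hence z.re < 0
    have hzre : z.re < 0 := by linarith
    have h1 : z.re^2 * Real.sin θ^2 ≤ Real.cos θ^2 * z.im^2 := by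
      nlinarith [sq_nonneg (Real.cos θ * ‖z‖ - z.re)]
    have hsq' : (σ + z.re)^2 ≤ z.re^2 := by
      nlinarith [mul_nonneg hσ (neg_nonneg.2 h.le), mul_nonneg hσ (neg_nonneg.2 hzre.le)]
    have h2 : (σ + z.re)^2 * Real.sin θ^2 ≤ Real.cos θ^2 * z.im^2 := by
      nlinarith [mul_le_mul_of_nonneg_right hsq' (sq_nonneg (Real.sin θ))]
    have h3 : (σ + z.re)^2 ≤ (Real.cos θ * ‖(σ:ℂ)+z‖)^2 := by
      nlinarith
    nlinarith [mul_nonneg (neg_nonneg.2 hcos.le) habs2]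

lemma lemC_abs {γ : ℝ} {w : ℂ} (hw : w ≠ 0) :
    ‖w ^ (γ:ℂ)‖ = (‖w‖) ^ γ := by
  rw [Complex.cpow_def_of_ne_zero hw, Complex.norm_exp,
    Real.rpow_def_of_pos (norm_pos_iff.mpr hw)]
  congr 1
  simp [Complex.mul_re, Complex.log_re]

lemma lemC_arg {θ : ℝ} (hθ0 : 0 ≤ θ) {w : ℂ} (hw : w ≠ 0)
    (hsec : Real.cos θ * ‖w‖ ≤ w.re) : |Complex.arg w| ≤ θ := by
  by_contra h
  push_neg at h
  have h1 : Real.cos |Complex.arg w| < Real.cos θ :=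
    Real.cos_lt_cos_of_nonneg_of_le_pi hθ0 (Complex.abs_arg_le_pi w) h
  rw [Real.cos_abs, Complex.cos_arg hw] at h1
  have habs : 0 < ‖w‖ := norm_pos_iff.mpr hw
  rw [div_lt_iff₀ habs] at h1
  nlinarith

lemma lemC_re {γ θ : ℝ} (hγ : γ ∈ Set.Ioo (0:ℝ) 1) (hθ0 : 0 < θ) (hθπ : θ < π) {w : ℂ}
    (hw : w ≠ 0) (hsec : Real.cos θ * ‖w‖ ≤ w.re) :
    Real.cos (γ * θ) * ‖w ^ (γ:ℂ)‖ ≤ (w ^ (γ:ℂ)).re := by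
  have harg : |Complex.arg w| ≤ θ := lemC_arg hθ0.le hw hsec
  have hre : (w ^ (γ:ℂ)).re = Real.exp (Real.log (‖w‖) * γ) * Real.cos (Complex.arg w * γ) := by
    rw [Complex.cpow_def_of_ne_zero hw, Complex.exp_re]
    simp [Complex.mul_re, Complex.mul_im, Complex.log_re, Complex.log_im]
  have hcos : Real.cos (γ * θ) ≤ Real.cos (Complex.arg w * γ) := by
    rw [← Real.cos_abs (Complex.arg w * γ)]
    apply Real.cos_le_cos_of_nonneg_of_le_pi (abs_nonneg _)
    · nlinarith [Real.pi_pos, mul_pos (sub_pos.2 hγ.2) hθ0]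
    · rw [abs_mul, abs_of_pos hγ.1]
      calc |Complex.arg w| * γ ≤ θ * γ := mul_le_mul_of_nonneg_right harg hγ.1.le
        _ = γ * θ := mul_comm _ _
  rw [hre, lemC_abs hw, Real.rpow_def_of_pos (norm_pos_iff.mpr hw)]
  nlinarith [Real.exp_pos (Real.log (‖w‖) * γ)]

lemma keyBound {γ σ θ lam : ℝ} (hγ : γ ∈ Set.Ioo (0:ℝ) 1) (hσ : 0 ≤ σ)
    (hθ : θ ∈ Set.Ioo (π/2) π) (hlam : 0 ≤ lam) {z : ℂ} (hz : z ≠ 0)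
    (hsec : Real.cos θ * ‖z‖ ≤ z.re) :
    ‖(((σ:ℂ) + z) ^ (γ:ℂ) + (lam:ℂ))⁻¹‖ ≤
      ((Real.sin θ) ^ γ * Real.sin (γ * θ))⁻¹ * (‖z‖) ^ (-γ) := by
  have hθ0 : 0 < θ := lt_trans (by positivity) hθ.1
  have hsin : 0 < Real.sin θ := Real.sin_pos_of_pos_of_lt_pi hθ0 hθ.2
  have hγθ0 : 0 < γ * θ := mul_pos hγ.1 hθ0
  have hγθπ : γ * θ < π := by nlinarith [mul_pos (sub_pos.2 hγ.2) hθ0, hθ.2]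
  have hsinγθ : 0 < Real.sin (γ * θ) := Real.sin_pos_of_pos_of_lt_pi hγθ0 hγθπ
  have habsz : 0 < ‖z‖ := norm_pos_iff.mpr hz
  -- |σ + z| ≥ sin θ |z|
  have h1 : Real.sin θ * ‖z‖ ≤ ‖(σ:ℂ) + z‖ := by
    have := lemA hθ0 hθ.2 hsec hσ
    rwa [add_comm] at this
  have hw : ((σ:ℂ) + z) ≠ 0 := by
    intro h
    rw [h, norm_zero] at h1
    nlinarith
  have hsec2 : Real.cos θ * ‖(σ:ℂ) + z‖ ≤ ((σ:ℂ) + z).re := lemB hθ hσ hsec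
  have habsw : ‖((σ:ℂ) + z) ^ (γ:ℂ)‖ = (‖(σ:ℂ) + z‖) ^ γ :=
    lemC_abs hw
  -- |w^γ + lam| ≥ sin(γθ) |w^γ|
  have h2 : Real.sin (γ * θ) * ‖((σ:ℂ) + z) ^ (γ:ℂ)‖ ≤
      ‖((σ:ℂ) + z) ^ (γ:ℂ) + (lam:ℂ)‖ :=
    lemA hγθ0 hγθπ (lemC_re hγ hθ0 hθ.2 hw hsec2) hlam
  -- |w^γ| ≥ (sin θ)^γ |z|^γ
  have h3 : (Real.sin θ) ^ γ * (‖z‖) ^ γ ≤ ‖((σ:ℂ) + z) ^ (γ:ℂ)‖ := by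
    rw [habsw, ← Real.mul_rpow hsin.le habsz.le]
    exact Real.rpow_le_rpow (by positivity) h1 hγ.1.le
  have hD : 0 < (Real.sin θ) ^ γ * Real.sin (γ * θ) * (‖z‖) ^ γ := by positivity
  have h4 : (Real.sin θ) ^ γ * Real.sin (γ * θ) * (‖z‖) ^ γ ≤
      ‖((σ:ℂ) + z) ^ (γ:ℂ) + (lam:ℂ)‖ := by
    calc (Real.sin θ) ^ γ * Real.sin (γ * θ) * (‖z‖) ^ γ
        = Real.sin (γ * θ) * ((Real.sin θ) ^ γ * (‖z‖) ^ γ) := by ring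
      _ ≤ Real.sin (γ * θ) * ‖((σ:ℂ) + z) ^ (γ:ℂ)‖ :=
          mul_le_mul_of_nonneg_left h3 hsinγθ.le
      _ ≤ _ := h2
  rw [norm_inv]
  have : ((Real.sin θ) ^ γ * Real.sin (γ * θ))⁻¹ * (‖z‖) ^ (-γ) =
      ((Real.sin θ) ^ γ * Real.sin (γ * θ) * (‖z‖) ^ γ)⁻¹ := by
    rw [Real.rpow_neg habsz.le]; field_simp
  rw [this]
  exact inv_anti₀ hD h4

lemma point_abs (r ψ : ℝ) (hr : 0 ≤ r) :
    ‖(r:ℂ) * Complex.exp ((ψ:ℂ) * Complex.I)‖ = r := by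
  rw [norm_mul, Complex.norm_exp_ofReal_mul_I, Complex.norm_real, Real.norm_eq_abs, abs_of_nonneg hr, mul_one]

lemma point_re (r ψ : ℝ) : ((r:ℂ) * Complex.exp ((ψ:ℂ) * Complex.I)).re = r * Real.cos ψ := by
  rw [Complex.mul_re, Complex.exp_ofReal_mul_I_re, Complex.exp_ofReal_mul_I_im]
  simp

/-- Norm bound for the kernel at a contour point `r e^{iψ}` with `r > 0`, `|ψ| ≤ θ`. -/
lemma resKer_abs_bound {γ σ θ lam : ℝ} (t : ℝ) (hγ : γ ∈ Set.Ioo (0:ℝ) 1) (hσ : 0 ≤ σ)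
    (hθ : θ ∈ Set.Ioo (π/2) π) (hlam : 0 ≤ lam) {r ψ : ℝ} (hr : 0 < r) (hψ : |ψ| ≤ θ) :
    ‖resKer γ σ lam t ((r:ℂ) * Complex.exp ((ψ:ℂ) * Complex.I))‖ ≤
      Real.exp (r * Real.cos ψ * t) *
        (((Real.sin θ) ^ γ * Real.sin (γ * θ))⁻¹ * r ^ (-γ)) := by
  set z : ℂ := (r:ℂ) * Complex.exp ((ψ:ℂ) * Complex.I) with hz
  have habs : ‖z‖ = r := point_abs r ψ hr.le
  have hzre : z.re = r * Real.cos ψ := point_re r ψ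
  have hzne : z ≠ 0 := by
    intro h; rw [h, norm_zero] at habs; exact hr.ne habs
  have hsec : Real.cos θ * ‖z‖ ≤ z.re := by
    rw [habs, hzre]
    have : Real.cos θ ≤ Real.cos ψ := by
      rw [← Real.cos_abs ψ]
      exact Real.cos_le_cos_of_nonneg_of_le_pi (abs_nonneg _) hθ.2.le hψ
    nlinarith
  have h1 : ‖Complex.exp (z * (t:ℂ))‖ = Real.exp (r * Real.cos ψ * t) := by
    rw [Complex.norm_exp]
    congr 1
    simp [Complex.mul_re, hzre]
  have h2 := keyBound (lam := lam) hγ hσ hθ hlam hzne hsec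
  rw [habs] at h2
  rw [resKer, norm_mul, h1]
  exact mul_le_mul_of_nonneg_left h2 (Real.exp_pos _).le


/-- Scalar smoothing estimate: for γ ∈ (0,1), σ ≥ 0, θ ∈ (π/2,π), κ > 0, T > 0 there is
c > 0 with |E(t)| ≤ c·t^{γ−1} for all t ∈ (0,T] and all λ ≥ 0. -/
theorem Eop_smoothing_bound (γ σ θ κ T : ℝ) (hγ : γ ∈ Set.Ioo (0 : ℝ) 1) (hσ : 0 ≤ σ)
    (hθ : θ ∈ Set.Ioo (π / 2) π) (hκ : 0 < κ) (hT : 0 < T) :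
    ∃ c > (0 : ℝ), ∀ t ∈ Set.Ioc (0 : ℝ) T, ∀ lam : ℝ, 0 ≤ lam →
      ‖Eop γ σ lam θ κ t‖ ≤ c * t ^ (γ - 1) := by
  obtain ⟨hγ0, hγ1⟩ := hγ
  obtain ⟨hθ1, hθ2⟩ := hθ
  have hθ0 : 0 < θ := lt_trans (by positivity) hθ1
  have hsin : 0 < Real.sin θ := Real.sin_pos_of_pos_of_lt_pi hθ0 hθ2
  have hγθπ : γ * θ < π := by nlinarith [mul_pos (sub_pos.2 hγ1) hθ0]
  have hsinγθ : 0 < Real.sin (γ * θ) := Real.sin_pos_of_pos_of_lt_pi (mul_pos hγ0 hθ0) hγθπ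
  have hcos : Real.cos θ < 0 :=
    Real.cos_neg_of_pi_div_two_lt_of_lt hθ1 (by linarith [Real.pi_pos])
  set Cinv : ℝ := ((Real.sin θ) ^ γ * Real.sin (γ * θ))⁻¹ with hCinv
  have hCinvpos : 0 < Cinv :=
    inv_pos.2 (mul_pos (Real.rpow_pos_of_pos hsin γ) hsinγθ)
  have hΓ : 0 < Real.Gamma (1 - γ) := Real.Gamma_pos_of_pos (by linarith)
  set CR : ℝ := 2 * Cinv * ((-Real.cos θ) ^ (γ - 1) * Real.Gamma (1 - γ)) with hCRdef
  set CA : ℝ := Real.exp (κ * T) * (Cinv * κ ^ (-γ)) * κ * (2 * θ) with hCAdef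
  have hCRpos : 0 < CR := by
    apply mul_pos (by linarith)
    exact mul_pos (Real.rpow_pos_of_pos (by linarith) _) hΓ
  have hCApos : 0 < CA := by
    apply mul_pos (mul_pos (mul_pos (Real.exp_pos _)
      (mul_pos hCinvpos (Real.rpow_pos_of_pos hκ _))) hκ)
    linarith
  refine ⟨(2 * π)⁻¹ * (CR + CA * T ^ (1 - γ)), ?_, ?_⟩
  · apply mul_pos (inv_pos.2 Real.two_pi_pos)
    have := Real.rpow_pos_of_pos hT (1 - γ)
    nlinarith
  intro t ht lam hlam
  obtain ⟨ht0, htT⟩ := ht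
  set a : ℝ := t * (-Real.cos θ) with ha
  have ha0 : 0 < a := mul_pos ht0 (by linarith)
  have he : ((1 : ℝ) - γ) - 1 = -γ := by ring
  -- integrability of the dominating function
  have hint0 : IntegrableOn (fun x : ℝ => x ^ (-γ) * Real.exp (-(a * x))) (Set.Ioi 0) := by
    have base : IntegrableOn (fun x : ℝ => Real.exp (-x) * x ^ ((1 - γ) - 1)) (Set.Ioi 0) :=
      Real.GammaIntegral_convergent (by linarith)
    have comp' := MeasureTheory.integrableOn_Ioi_comp_mul_left_iff
        (fun x : ℝ => Real.exp (-x) * x ^ ((1 - γ) - 1)) 0 ha0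
    rw [mul_zero] at comp'
    have comp : IntegrableOn
        (fun x : ℝ => Real.exp (-(a * x)) * (a * x) ^ ((1 - γ) - 1)) (Set.Ioi 0) :=
      comp'.2 base
    have comp2 : IntegrableOn
        (fun x : ℝ => a ^ γ * (Real.exp (-(a * x)) * (a * x) ^ ((1 - γ) - 1)))
        (Set.Ioi 0) := comp.const_mul (a ^ γ)
    apply comp2.congr_fun ?_ measurableSet_Ioi
    intro x hx
    have hx0 : (0 : ℝ) < x := hx
    have haa : a ^ γ * a ^ (-γ) = 1 := by
      rw [← Real.rpow_add ha0]; norm_num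
    show a ^ γ * (Real.exp (-(a * x)) * (a * x) ^ ((1 - γ) - 1)) =
      x ^ (-γ) * Real.exp (-(a * x))
    rw [he, Real.mul_rpow ha0.le hx0.le]
    calc a ^ γ * (Real.exp (-(a * x)) * (a ^ (-γ) * x ^ (-γ)))
        = (a ^ γ * a ^ (-γ)) * (x ^ (-γ) * Real.exp (-(a * x))) := by ring
      _ = x ^ (-γ) * Real.exp (-(a * x)) := by rw [haa, one_mul]
  have hintκ : IntegrableOn (fun x : ℝ => x ^ (-γ) * Real.exp (-(a * x))) (Set.Ioi κ) :=
    hint0.mono_set (Set.Ioi_subset_Ioi hκ.le)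
  have hval := Real.integral_rpow_mul_exp_neg_mul_Ioi (show (0:ℝ) < 1 - γ by linarith) ha0
  rw [he] at hval
  -- ray estimate
  have hray : ‖∫ r in Set.Ioi κ,
      (resKer γ σ lam t ((r : ℂ) * Complex.exp ((θ : ℂ) * Complex.I)) *
          Complex.exp ((θ : ℂ) * Complex.I)
        - resKer γ σ lam t ((r : ℂ) * Complex.exp (-(θ : ℂ) * Complex.I)) *
          Complex.exp (-(θ : ℂ) * Complex.I))‖ ≤
      (2 * Cinv) * ((1 / a) ^ (1 - γ) * Real.Gamma (1 - γ)) := by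
    calc ‖_‖ ≤ ∫ r in Set.Ioi κ, ‖(resKer γ σ lam t ((r : ℂ) * Complex.exp ((θ : ℂ) * Complex.I)) *
          Complex.exp ((θ : ℂ) * Complex.I)
        - resKer γ σ lam t ((r : ℂ) * Complex.exp (-(θ : ℂ) * Complex.I)) *
          Complex.exp (-(θ : ℂ) * Complex.I))‖ := norm_integral_le_integral_norm _
      _ ≤ ∫ r in Set.Ioi κ, (2 * Cinv) * (r ^ (-γ) * Real.exp (-(a * r))) := by
          apply integral_mono_of_nonneg (Filter.Eventually.of_forall fun r => norm_nonneg _)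
            (hintκ.const_mul _)
          filter_upwards [self_mem_ae_restrict measurableSet_Ioi] with r hr
          have hr0 : (0:ℝ) < r := lt_trans hκ hr
          have hb1 := resKer_abs_bound (θ := θ) t ⟨hγ0, hγ1⟩ hσ ⟨hθ1, hθ2⟩ hlam hr0
            (le_of_eq (abs_of_pos hθ0))
          have hcast : (-(θ:ℂ)) = (((-θ : ℝ)):ℂ) := by push_cast; ring
          have hb2 := resKer_abs_bound (θ := θ) t ⟨hγ0, hγ1⟩ hσ ⟨hθ1, hθ2⟩ hlam hr0
            (show |(-θ)| ≤ θ by rw [abs_neg, abs_of_pos hθ0])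
          rw [Real.cos_neg] at hb2
          have hE : Real.exp (r * Real.cos θ * t) = Real.exp (-(a * r)) := by
            congr 1; rw [ha]; ring
          rw [hE] at hb1 hb2
          have hA : ‖resKer γ σ lam t ((r : ℂ) * Complex.exp ((θ : ℂ) * Complex.I)) *
              Complex.exp ((θ : ℂ) * Complex.I)‖ ≤ Real.exp (-(a * r)) * (Cinv * r ^ (-γ)) := by
            rw [norm_mul,
              Complex.norm_exp_ofReal_mul_I, mul_one]
            exact hb1
          have hB : ‖resKer γ σ lam t ((r : ℂ) * Complex.exp (-(θ : ℂ) * Complex.I)) *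
              Complex.exp (-(θ : ℂ) * Complex.I)‖ ≤ Real.exp (-(a * r)) * (Cinv * r ^ (-γ)) := by
            rw [norm_mul, hcast,
              Complex.norm_exp_ofReal_mul_I, mul_one]
            exact hb2
          calc ‖_ - _‖ ≤ _ + _ := norm_sub_le _ _
            _ ≤ Real.exp (-(a * r)) * (Cinv * r ^ (-γ)) +
                Real.exp (-(a * r)) * (Cinv * r ^ (-γ)) := add_le_add hA hB
            _ = (2 * Cinv) * (r ^ (-γ) * Real.exp (-(a * r))) := by ring
      _ = (2 * Cinv) * ∫ r in Set.Ioi κ, r ^ (-γ) * Real.exp (-(a * r)) :=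
          integral_const_mul _ _
      _ ≤ (2 * Cinv) * ∫ r in Set.Ioi 0, r ^ (-γ) * Real.exp (-(a * r)) := by
          apply mul_le_mul_of_nonneg_left _ (by linarith)
          apply setIntegral_mono_set hint0
          · filter_upwards [self_mem_ae_restrict measurableSet_Ioi] with x hx
            have hx0 : (0:ℝ) < x := hx
            positivity
          · exact HasSubset.Subset.eventuallyLE (Set.Ioi_subset_Ioi hκ.le)
      _ = (2 * Cinv) * ((1 / a) ^ (1 - γ) * Real.Gamma (1 - γ)) := by rw [hval]
  -- arc estimate
  have harc : ‖∫ ψ in (-θ)..θ,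
      resKer γ σ lam t ((κ : ℂ) * Complex.exp ((ψ : ℂ) * Complex.I)) *
        (Complex.I * (κ : ℂ) * Complex.exp ((ψ : ℂ) * Complex.I))‖ ≤ CA := by
    have hM : ∀ ψ ∈ Set.uIoc (-θ) θ,
        ‖resKer γ σ lam t ((κ : ℂ) * Complex.exp ((ψ : ℂ) * Complex.I)) *
          (Complex.I * (κ : ℂ) * Complex.exp ((ψ : ℂ) * Complex.I))‖ ≤
        Real.exp (κ * T) * (Cinv * κ ^ (-γ)) * κ := by
      intro ψ hψ
      rw [Set.uIoc_of_le (by linarith : -θ ≤ θ)] at hψ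
      have hψθ : |ψ| ≤ θ := abs_le.2 ⟨hψ.1.le, hψ.2⟩
      have hb := resKer_abs_bound (θ := θ) t ⟨hγ0, hγ1⟩ hσ ⟨hθ1, hθ2⟩ hlam hκ hψθ
      have hexp : Real.exp (κ * Real.cos ψ * t) ≤ Real.exp (κ * T) := by
        apply Real.exp_le_exp.2
        have b1 : κ * Real.cos ψ * t ≤ κ * t := by
          nlinarith [mul_nonneg (mul_pos hκ ht0).le (sub_nonneg.2 (Real.cos_le_one ψ))]
        have b2 : κ * t ≤ κ * T := mul_le_mul_of_nonneg_left htT hκ.le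
        linarith
      have habsI : ‖Complex.I * (κ : ℂ) * Complex.exp ((ψ : ℂ) * Complex.I)‖ = κ := by
        rw [norm_mul, norm_mul, Complex.norm_I, Complex.norm_exp_ofReal_mul_I,
          Complex.norm_real, Real.norm_eq_abs, abs_of_pos hκ, one_mul, mul_one]
      rw [norm_mul, habsI]
      apply mul_le_mul_of_nonneg_right _ hκ.le
      calc ‖resKer γ σ lam t ((κ : ℂ) * Complex.exp ((ψ : ℂ) * Complex.I))‖
          ≤ Real.exp (κ * Real.cos ψ * t) * (Cinv * κ ^ (-γ)) := hb
        _ ≤ Real.exp (κ * T) * (Cinv * κ ^ (-γ)) := by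
            apply mul_le_mul_of_nonneg_right hexp
            positivity
    calc ‖_‖ ≤ Real.exp (κ * T) * (Cinv * κ ^ (-γ)) * κ * |θ - (-θ)| :=
        intervalIntegral.norm_integral_le_of_norm_le_const hM
      _ = CA := by rw [hCAdef, abs_of_pos (by linarith : (0:ℝ) < θ - (-θ))]; ring
  -- assemble
  have habs2π : ‖1 / (2 * (π : ℂ) * Complex.I)‖ = (2 * π)⁻¹ := by
    rw [norm_div, norm_one, norm_mul, norm_mul, Complex.norm_I, Complex.norm_two,
      Complex.norm_real, Real.norm_eq_abs, abs_of_pos Real.pi_pos, mul_one, one_div]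
  have hpow : (1 / a) ^ (1 - γ) = t ^ (γ - 1) * (-Real.cos θ) ^ (γ - 1) := by
    rw [one_div, Real.inv_rpow ha0.le, ← Real.rpow_neg ha0.le,
      show -(1 - γ) = γ - 1 by ring, ha,
      Real.mul_rpow ht0.le (by linarith : (0:ℝ) ≤ -Real.cos θ)]
  have hrayCR : ‖∫ r in Set.Ioi κ,
      (resKer γ σ lam t ((r : ℂ) * Complex.exp ((θ : ℂ) * Complex.I)) *
          Complex.exp ((θ : ℂ) * Complex.I)
        - resKer γ σ lam t ((r : ℂ) * Complex.exp (-(θ : ℂ) * Complex.I)) *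
          Complex.exp (-(θ : ℂ) * Complex.I))‖ ≤ CR * t ^ (γ - 1) := by
    refine hray.trans (le_of_eq ?_)
    rw [hpow, hCRdef]; ring
  rw [Eop, norm_mul, habs2π]
  have habsadd := norm_add_le
    (∫ r in Set.Ioi κ,
      (resKer γ σ lam t ((r : ℂ) * Complex.exp ((θ : ℂ) * Complex.I)) *
          Complex.exp ((θ : ℂ) * Complex.I)
        - resKer γ σ lam t ((r : ℂ) * Complex.exp (-(θ : ℂ) * Complex.I)) *
          Complex.exp (-(θ : ℂ) * Complex.I)))
    (∫ ψ in (-θ)..θ,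
      resKer γ σ lam t ((κ : ℂ) * Complex.exp ((ψ : ℂ) * Complex.I)) *
        (Complex.I * (κ : ℂ) * Complex.exp ((ψ : ℂ) * Complex.I)))
  have h5 : T ^ (γ - 1) ≤ t ^ (γ - 1) :=
    Real.rpow_le_rpow_of_nonpos ht0 htT (by linarith)
  have h6 : T ^ (1 - γ) * T ^ (γ - 1) = 1 := by
    rw [← Real.rpow_add hT]; norm_num
  have h7 : CA ≤ CA * T ^ (1 - γ) * t ^ (γ - 1) := by
    calc CA = CA * (T ^ (1 - γ) * T ^ (γ - 1)) := by rw [h6, mul_one]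
      _ ≤ CA * (T ^ (1 - γ) * t ^ (γ - 1)) := by
          apply mul_le_mul_of_nonneg_left _ hCApos.le
          exact mul_le_mul_of_nonneg_left h5 (Real.rpow_nonneg hT.le _)
      _ = CA * T ^ (1 - γ) * t ^ (γ - 1) := by ring
  calc (2 * π)⁻¹ * ‖_‖ ≤ (2 * π)⁻¹ * (CR * t ^ (γ - 1) + CA) := by
        apply mul_le_mul_of_nonneg_left _ (inv_nonneg.2 Real.two_pi_pos.le)
        exact habsadd.trans (add_le_add hrayCR harc)
    _ ≤ (2 * π)⁻¹ * (CR + CA * T ^ (1 - γ)) * t ^ (γ - 1) := by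
        rw [mul_assoc ((2 * π)⁻¹)]
        apply mul_le_mul_of_nonneg_left _ (inv_nonneg.2 Real.two_pi_pos.le)
        nlinarith [h7, Real.rpow_pos_of_pos ht0 (γ - 1)]
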